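/- For a set S of non-pointed matrices (S ⊆ matr), the following are equivalent: (i) every finitely complete category with S-closed relations is a preorder; (ii) the opposite category Setᵒᵖ of the category of sets does not have S-closed relations. -/

import Mathlib

open CategoryTheory CategoryTheory.Limits

universe w v u

/-- A (non-pointed) extended matrix `M ∈ matr(n,m,k)`: `n > 0` rows, `m` left
columns and one right column, with entries in `{x₁, …, x_k}` (modelled as
`Fin k`). `matr` is the union over all `n,m,k`, i.e. the type `Matr`. -/
structure Matr where
  n : ℕ
  m : ℕ
  k : ℕ
  npos : 0 < n
  left : Fin n → Fin m → Fin k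
  right : Fin n → Fin k

namespace Matr

variable {C : Type u} [Category.{v} C]

/-- A relation `r : R ⟶ P`, where `pr` exhibits `P` as the `n`-fold product
`Xⁿ`, is `M`-closed: for every object `Z` and every interpretation
`f : {x₁,…,x_k} → C(Z,X)` of the entries of `M`, if for every left column `j`
the induced morphism `Z ⟶ Xⁿ` factors through `r`, then so does the morphism
induced by the right column. -/
def IsClosed (M : Matr) {X P R : C} (pr : Fin M.n → (P ⟶ X))
    (hP : IsLimit (Fan.mk P pr)) (r : R ⟶ P) : Prop :=
  ∀ (Z : C) (f : Fin M.k → (Z ⟶ X)),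
    (∀ j : Fin M.m, ∃ g : Z ⟶ R,
        g ≫ r = hP.lift (Fan.mk Z (fun i => f (M.left i j)))) →
    ∃ g : Z ⟶ R, g ≫ r = hP.lift (Fan.mk Z (fun i => f (M.right i)))

/-- A relation `r : R ⟶ P`, where `pr` exhibits `P` as the product
`X₁ × ⋯ × X_n` of a family `X : Fin n → C`, is strictly `M`-closed: for every
object `Z` and every row-wise interpretation `fᵢ : {x₁,…,x_k} → C(Z,Xᵢ)`, if
every left column's induced morphism `Z ⟶ X₁ × ⋯ × X_n` factors through `r`,
then so does the right column's induced morphism. -/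
def IsStrictClosed (M : Matr) {X : Fin M.n → C} {P R : C}
    (pr : ∀ i, P ⟶ X i) (hP : IsLimit (Fan.mk P pr)) (r : R ⟶ P) : Prop :=
  ∀ (Z : C) (f : ∀ i, Fin M.k → (Z ⟶ X i)),
    (∀ j : Fin M.m, ∃ g : Z ⟶ R,
        g ≫ r = hP.lift (Fan.mk Z (fun i => f i (M.left i j)))) →
    ∃ g : Z ⟶ R, g ≫ r = hP.lift (Fan.mk Z (fun i => f i (M.right i)))

/-- `C` has `M`-closed `W`-relations: every `n`-ary relation `r : R ⟶ Xⁿ`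
belonging to the class of monomorphisms `W` is `M`-closed. -/
def HasClosedRels (M : Matr) (C : Type u) [Category.{v} C]
    (W : MorphismProperty C) : Prop :=
  ∀ (X P R : C) (pr : Fin M.n → (P ⟶ X)) (hP : IsLimit (Fan.mk P pr))
    (r : R ⟶ P), W r → M.IsClosed pr hP r

/-- `C` has `S`-closed `W`-relations. -/
def HasSClosedRels (S : Set Matr) (C : Type u) [Category.{v} C]
    (W : MorphismProperty C) : Prop :=
  ∀ M ∈ S, HasClosedRels M C W

end Matr

/-- The class of strong monomorphisms of `C`, as a `MorphismProperty`. -/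
def strongMonos (C : Type u) [Category.{v} C] : MorphismProperty C :=
  fun _ _ f => StrongMono f

/-- For a set `S` of non-pointed matrices, every finitely
complete category with `S`-closed relations is a preorder (at most one
morphism between any two objects) if and only if `Setᵒᵖ` (the opposite of
the category of sets) does not have `S`-closed relations. -/

def Matr.pairRel (M : Matr) (i i' : Fin M.n) :
    Fin M.k × Bool → Fin M.k × Bool → Prop :=
  fun p p' => ∃ j, p = (M.left i j, false) ∧ p' = (M.left i' j, true)

def Matr.Crit (M : Matr) : Prop :=
  ∀ i i', Relation.EqvGen (M.pairRel i i') (M.right i, false) (M.right i', true)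

theorem Matr.Crit.pair {M : Matr} (h : M.Crit) {α : Type u_1} {Z : Type u_2}
    (f : Fin M.k → α → Z) (i i' : Fin M.n) (x x' : α)
    (hl : ∀ j, f (M.left i j) x = f (M.left i' j) x') :
    f (M.right i) x = f (M.right i') x' := by
  have key : ∀ p p' : Fin M.k × Bool, Relation.EqvGen (M.pairRel i i') p p' →
      (if p.2 then f p.1 x' else f p.1 x) = (if p'.2 then f p'.1 x' else f p'.1 x) := by
    intro p p' hpp
    induction hpp with
    | rel a b hab => obtain ⟨j, rfl, rfl⟩ := hab; simpa using hl j
    | refl a => rfl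
    | symm a b _ ih => exact ih.symm
    | trans a b c _ _ ih1 ih2 => exact ih1.trans ih2
  simpa using key _ _ (h i i')

theorem Matr.crit_of_closed {C : Type u_1} [Category.{u_2} C] [HasFiniteLimits C]
    {X Y : C} {φ ψ : X ⟶ Y} (hφψ : φ ≠ ψ) (M : Matr)
    (hM : M.HasClosedRels C (MorphismProperty.monomorphisms C)) : M.Crit := by
  classical
  intro i i'
  by_contra hne
  let w : Quot (M.pairRel i i') → (X ⟶ Y) :=
    fun c => if c = Quot.mk _ (M.right i, false) then φ else ψ
  let w0 : Fin M.k × Bool → (X ⟶ Y) := fun p => w (Quot.mk _ p)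
  let D := Limits.prod Y Y
  let f : Fin M.k → (X ⟶ D) := fun t => prod.lift (w0 (t, false)) (w0 (t, true))
  let P := ∏ᶜ (fun _ : Fin M.n => D)
  let pr : Fin M.n → (P ⟶ D) := fun i0 => Pi.π _ i0
  have hP : IsLimit (Fan.mk P pr) := productIsProduct _
  have hfac : ∀ (c : Fin M.n → (X ⟶ D)) (i0 : Fin M.n),
      hP.lift (Fan.mk X c) ≫ pr i0 = c i0 := fun c i0 => hP.fac (Fan.mk X c) ⟨i0⟩
  let a : P ⟶ Y := pr i ≫ prod.fst
  let b : P ⟶ Y := pr i' ≫ prod.snd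
  have hmono : MorphismProperty.monomorphisms C (equalizer.ι a b) :=
    inferInstanceAs (Mono _)
  obtain ⟨g, hg⟩ := hM D P (equalizer a b) pr hP (equalizer.ι a b) hmono X f (by
    intro j
    refine ⟨equalizer.lift (hP.lift (Fan.mk X (fun i2 => f (M.left i2 j)))) ?_, equalizer.lift_ι _ _⟩
    show _ ≫ (pr i ≫ prod.fst) = _ ≫ (pr i' ≫ prod.snd)
    rw [← Category.assoc, ← Category.assoc, hfac, hfac]
    show f (M.left i j) ≫ prod.fst = f (M.left i' j) ≫ prod.snd
    rw [prod.lift_fst, prod.lift_snd]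
    exact congrArg w (Quot.sound ⟨j, rfl, rfl⟩))
  have hcr : hP.lift (Fan.mk X (fun i2 => f (M.right i2))) ≫ a
      = hP.lift (Fan.mk X (fun i2 => f (M.right i2))) ≫ b := by
    rw [← hg, Category.assoc, Category.assoc, equalizer.condition]
  have hxy : w0 (M.right i, false) = w0 (M.right i', true) := by
    have h1 : hP.lift (Fan.mk X (fun i2 => f (M.right i2))) ≫ a = w0 (M.right i, false) := by
      show _ ≫ (pr i ≫ prod.fst) = _
      rw [← Category.assoc, hfac]
      exact prod.lift_fst _ _
    have h2 : hP.lift (Fan.mk X (fun i2 => f (M.right i2))) ≫ b = w0 (M.right i', true) := by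
      show _ ≫ (pr i' ≫ prod.snd) = _
      rw [← Category.assoc, hfac]
      exact prod.lift_snd _ _
    rw [← h1, ← h2, hcr]
  apply hφψ
  have hL : w0 (M.right i, false) = φ := if_pos rfl
  have hR : w0 (M.right i', true) = ψ := by
    apply if_neg
    intro heq
    exact hne (Relation.EqvGen.symm _ _ (Quot.eqvGen_exact heq))
  rw [← hL, ← hR]
  exact hxy

theorem Matr.closed_setOp_of_crit {M : Matr} (h : M.Crit) :
    M.HasClosedRels (Type w)ᵒᵖ (MorphismProperty.monomorphisms (Type w)ᵒᵖ) := by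
  classical
  intro X P R pr hP r hr Z f hleft
  haveI : Mono r := hr
  have hq : Function.Surjective r.unop := (epi_iff_surjective _).mp inferInstance
  have hsurj : ∀ p : P.unop, ∃ (i0 : Fin M.n) (x : X.unop), (pr i0).unop x = p := by
    by_contra hcon
    push_neg at hcon
    obtain ⟨p0, hp0⟩ := hcon
    let B : Type w := ULift Bool
    let χ₁ : P.unop ⟶ B := TypeCat.ofHom fun _ => (⟨true⟩ : B)
    let χ₂ : P.unop ⟶ B := TypeCat.ofHom fun p => if ∃ i0 x, (pr i0).unop x = p then (⟨true⟩ : B) else ⟨false⟩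
    let m₁ : Opposite.op B ⟶ P := χ₁.op
    let m₂ : Opposite.op B ⟶ P := χ₂.op
    have h2 : ∀ i0, m₂ ≫ pr i0 = m₁ ≫ pr i0 := by
      intro i0
      apply Quiver.Hom.unop_inj
      refine ConcreteCategory.hom_ext _ _ fun x => ?_
      show χ₂ ((pr i0).unop x) = χ₁ ((pr i0).unop x)
      show (if ∃ i1 x1, (pr i1).unop x1 = (pr i0).unop x then (⟨true⟩:B) else ⟨false⟩) = ⟨true⟩
      rw [if_pos ⟨i0, x, rfl⟩]
    have e₁ : m₁ = hP.lift (Fan.mk (Opposite.op B) fun i0 => m₁ ≫ pr i0) :=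
      hP.uniq (Fan.mk (Opposite.op B) fun i0 => m₁ ≫ pr i0) m₁ (by rintro ⟨j⟩; rfl)
    have e₂ : m₂ = hP.lift (Fan.mk (Opposite.op B) fun i0 => m₁ ≫ pr i0) :=
      hP.uniq (Fan.mk (Opposite.op B) fun i0 => m₁ ≫ pr i0) m₂ (by rintro ⟨j⟩; exact h2 j)
    have hχ : χ₁ = χ₂ := Quiver.Hom.op_inj (e₁.trans e₂.symm)
    have := types_congr_hom hχ p0
    show False
    rw [show χ₁ p0 = ⟨true⟩ from rfl,
      show χ₂ p0 = ⟨false⟩ from if_neg (by push_neg; exact hp0)] at this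
    exact Bool.noConfusion (congrArg ULift.down this)
  have hfac : ∀ (c : Fin M.n → (Z ⟶ X)) (i0 : Fin M.n) (x : X.unop),
      (hP.lift (Fan.mk Z c)).unop ((pr i0).unop x) = (c i0).unop x :=
    fun c i0 x => types_congr_hom (congrArg Quiver.Hom.unop (hP.fac (Fan.mk Z c) ⟨i0⟩)) x
  have hconst : ∀ (c : Fin M.n → (Z ⟶ X)) (g : Z ⟶ R),
      g ≫ r = hP.lift (Fan.mk Z c) → ∀ p p', r.unop p = r.unop p' →
      (hP.lift (Fan.mk Z c)).unop p = (hP.lift (Fan.mk Z c)).unop p' := by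
    intro c g hg p p' hpp
    rw [← hg]
    show g.unop (r.unop p) = g.unop (r.unop p')
    rw [hpp]
  have hRconst : ∀ p p', r.unop p = r.unop p' →
      (hP.lift (Fan.mk Z fun i0 => f (M.right i0))).unop p
        = (hP.lift (Fan.mk Z fun i0 => f (M.right i0))).unop p' := by
    intro p p' hpp
    obtain ⟨i0, x, rfl⟩ := hsurj p
    obtain ⟨i1, x', rfl⟩ := hsurj p'
    have hl : ∀ j, (f (M.left i0 j)).unop x = (f (M.left i1 j)).unop x' := by
      intro j
      obtain ⟨g, hg⟩ := hleft j
      have h1 := hconst _ g hg _ _ hpp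
      rw [hfac, hfac] at h1
      exact h1
    have := h.pair (fun t => (f t).unop) i0 i1 x x' hl
    rw [hfac, hfac]
    exact this
  refine ⟨Quiver.Hom.op (TypeCat.ofHom fun b => (hP.lift (Fan.mk Z fun i0 => f (M.right i0))).unop
    (Function.surjInv hq b)), ?_⟩
  apply Quiver.Hom.unop_inj
  refine ConcreteCategory.hom_ext _ _ fun p => ?_
  show (hP.lift (Fan.mk Z fun i0 => f (M.right i0))).unop (Function.surjInv hq (r.unop p))
      = (hP.lift (Fan.mk Z fun i0 => f (M.right i0))).unop p
  exact hRconst _ _ (Function.surjInv_eq hq (r.unop p))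

structure FSOp : Type u where
  down : ℕ

instance : Category.{v} FSOp.{u} where
  Hom a b := ULift.{v} (Fin b.down → Fin a.down)
  id a := ⟨fun x => x⟩
  comp f g := ⟨f.down ∘ g.down⟩
  id_comp _ := rfl
  comp_id _ := rfl
  assoc _ _ _ := rfl

namespace FSOp

theorem hom_ext {a b : FSOp.{u}} {f g : a ⟶ b} (h : f.down = g.down) : f = g :=
  congrArg ULift.up h

theorem down_comp {a b c : FSOp.{u}} (f : a ⟶ b) (g : b ⟶ c) (x : Fin c.down) :
    (f ≫ g).down x = f.down (g.down x) := rfl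

instance (a : FSOp.{u}) : Unique (a ⟶ (FSOp.mk 0 : FSOp.{u})) where
  default := ⟨fun x => x.elim0⟩
  uniq f := hom_ext (funext fun x => x.elim0)

instance : HasTerminal FSOp.{u} := hasTerminal_of_unique (FSOp.mk 0)

theorem hasProduct (n : ℕ) (c : Fin n → FSOp.{u}) : HasLimit (Discrete.functor c) := by
  classical
  let T := Σ i : Fin n, Fin (c i).down
  let e : T ≃ Fin (Fintype.card T) := Fintype.equivFin T
  let P : FSOp.{u} := ⟨Fintype.card T⟩
  let leg : ∀ i, P ⟶ c i := fun i => ⟨fun x => e ⟨i, x⟩⟩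
  refine HasLimit.mk ⟨Fan.mk P leg, mkFanLimit _
    (fun s => ⟨fun p => (s.proj (e.symm p).1).down (e.symm p).2⟩) ?_ ?_⟩
  · intro s j
    apply hom_ext
    funext x
    show (s.proj (e.symm (e ⟨j, x⟩)).1).down (e.symm (e ⟨j, x⟩)).2 = (s.proj j).down x
    rw [e.symm_apply_apply]
  · intro s m hm
    have key : ∀ (t : T), m.down (e t) = (s.proj t.1).down t.2 := by
      rintro ⟨i, x⟩
      exact congrFun (congrArg ULift.down (hm i)) x
    apply hom_ext
    funext p
    calc m.down p = m.down (e (e.symm p)) := by rw [e.apply_symm_apply]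
      _ = (s.proj (e.symm p).1).down (e.symm p).2 := key _

instance : HasFiniteProducts FSOp.{u} :=
  ⟨fun n => ⟨fun F => by
    haveI := hasProduct n (F.obj ∘ Discrete.mk)
    exact hasLimit_of_iso (Discrete.natIsoFunctor (F := F)).symm⟩⟩

theorem hasEqualizer {a b : FSOp.{u}} (f g : a ⟶ b) : HasLimit (parallelPair f g) := by
  classical
  let Rl : Fin a.down → Fin a.down → Prop := fun x x' => ∃ y, f.down y = x ∧ g.down y = x'
  let T := Quot Rl
  haveI : Finite T := Finite.of_surjective _ (Quot.mk_surjective (r := Rl))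
  haveI : Fintype T := Fintype.ofFinite T
  let e : T ≃ Fin (Fintype.card T) := Fintype.equivFin T
  let E : FSOp.{u} := ⟨Fintype.card T⟩
  let ι : E ⟶ a := ⟨fun x => e (Quot.mk Rl x)⟩
  have hcond : ι ≫ f = ι ≫ g := by
    apply hom_ext
    funext y
    show e (Quot.mk Rl (f.down y)) = e (Quot.mk Rl (g.down y))
    exact congrArg e (Quot.sound ⟨y, rfl, rfl⟩)
  have hresp : ∀ (s : Fork f g) (x x' : Fin a.down), Rl x x' → s.ι.down x = s.ι.down x' := by
    rintro s x x' ⟨y, rfl, rfl⟩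
    exact congrFun (congrArg ULift.down s.condition) y
  refine HasLimit.mk ⟨Fork.ofι ι hcond, Fork.IsLimit.mk _
    (fun s => ⟨fun p => Quot.lift s.ι.down (hresp s) (e.symm p)⟩) ?_ ?_⟩
  · intro s
    apply hom_ext
    funext x
    show Quot.lift s.ι.down (hresp s) (e.symm (e (Quot.mk Rl x))) = s.ι.down x
    rw [e.symm_apply_apply]
  · intro s m hm
    apply hom_ext
    funext p
    obtain ⟨x, hx⟩ := Quot.exists_rep (e.symm p)
    have hp : p = e (Quot.mk Rl x) := by rw [hx, e.apply_symm_apply]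
    calc m.down p = m.down (e (Quot.mk Rl x)) := by rw [hp]
      _ = s.ι.down x := congrFun (congrArg ULift.down hm) x
      _ = Quot.lift s.ι.down (hresp s) (e.symm p) := by rw [← hx]
  
instance : HasEqualizers FSOp.{u} := by
  haveI : ∀ {X Y : FSOp.{u}} (f g : X ⟶ Y), HasLimit (parallelPair f g) :=
    fun f g => hasEqualizer f g
  exact hasEqualizers_of_hasLimit_parallelPair _

instance : HasFiniteLimits FSOp.{u} :=
  hasFiniteLimits_of_hasEqualizers_and_finite_products

end FSOp

theorem FSOp.closed_of_crit {M : Matr} (h : M.Crit) :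
    M.HasClosedRels FSOp.{u} (MorphismProperty.monomorphisms FSOp.{u}) := by
  classical
  intro X P R pr hP r hr Z f hleft
  haveI : Mono r := hr
  have hq : Function.Surjective r.down := by
    by_contra hcon
    rw [Function.Surjective] at hcon
    push_neg at hcon
    obtain ⟨y0, hy0⟩ := hcon
    let g₁ : (FSOp.mk 2 : FSOp.{u}) ⟶ R := ⟨fun _ => 0⟩
    let g₂ : (FSOp.mk 2 : FSOp.{u}) ⟶ R := ⟨fun b => if b = y0 then 1 else 0⟩
    have : g₁ ≫ r = g₂ ≫ r := by
      apply hom_ext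
      funext x
      show (0 : Fin 2) = if r.down x = y0 then 1 else 0
      rw [if_neg (hy0 x)]
    have := congrFun (congrArg ULift.down ((cancel_mono r).mp this)) y0
    rw [show g₂.down y0 = 1 from if_pos rfl] at this
    exact (by decide : (0:Fin 2) ≠ 1) this
  have hsurj : ∀ p : Fin P.down, ∃ (i0 : Fin M.n) (x : Fin X.down), (pr i0).down x = p := by
    by_contra hcon
    push_neg at hcon
    obtain ⟨p0, hp0⟩ := hcon
    let m₁ : (FSOp.mk 2 : FSOp.{u}) ⟶ P := ⟨fun _ => 0⟩
    let m₂ : (FSOp.mk 2 : FSOp.{u}) ⟶ P :=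
      ⟨fun p => if ∃ i0 x, (pr i0).down x = p then 0 else 1⟩
    have h2 : ∀ i0, m₂ ≫ pr i0 = m₁ ≫ pr i0 := by
      intro i0
      apply hom_ext
      funext x
      show (if ∃ i1 x1, (pr i1).down x1 = (pr i0).down x then (0:Fin 2) else 1) = 0
      rw [if_pos ⟨i0, x, rfl⟩]
    have e₁ : m₁ = hP.lift (Fan.mk (FSOp.mk 2) fun i0 => m₁ ≫ pr i0) :=
      hP.uniq (Fan.mk (FSOp.mk 2) fun i0 => m₁ ≫ pr i0) m₁ (by rintro ⟨j⟩; rfl)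
    have e₂ : m₂ = hP.lift (Fan.mk (FSOp.mk 2) fun i0 => m₁ ≫ pr i0) :=
      hP.uniq (Fan.mk (FSOp.mk 2) fun i0 => m₁ ≫ pr i0) m₂ (by rintro ⟨j⟩; exact h2 j)
    have := congrFun (congrArg ULift.down (e₁.trans e₂.symm)) p0
    rw [show m₂.down p0 = 1 from if_neg (by push_neg; exact hp0)] at this
    exact (by decide : (0:Fin 2) ≠ 1) this
  have hfac : ∀ (c : Fin M.n → (Z ⟶ X)) (i0 : Fin M.n) (x : Fin X.down),
      (hP.lift (Fan.mk Z c)).down ((pr i0).down x) = (c i0).down x :=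
    fun c i0 x => congrFun (congrArg ULift.down (hP.fac (Fan.mk Z c) ⟨i0⟩)) x
  have hconst : ∀ (c : Fin M.n → (Z ⟶ X)) (g : Z ⟶ R),
      g ≫ r = hP.lift (Fan.mk Z c) → ∀ p p', r.down p = r.down p' →
      (hP.lift (Fan.mk Z c)).down p = (hP.lift (Fan.mk Z c)).down p' := by
    intro c g hg p p' hpp
    rw [← hg]
    show g.down (r.down p) = g.down (r.down p')
    rw [hpp]
  have hRconst : ∀ p p', r.down p = r.down p' →
      (hP.lift (Fan.mk Z fun i0 => f (M.right i0))).down p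
        = (hP.lift (Fan.mk Z fun i0 => f (M.right i0))).down p' := by
    intro p p' hpp
    obtain ⟨i0, x, rfl⟩ := hsurj p
    obtain ⟨i1, x', rfl⟩ := hsurj p'
    have hl : ∀ j, (f (M.left i0 j)).down x = (f (M.left i1 j)).down x' := by
      intro j
      obtain ⟨g, hg⟩ := hleft j
      have h1 := hconst _ g hg _ _ hpp
      rw [hfac, hfac] at h1
      exact h1
    have := h.pair (fun t => (f t).down) i0 i1 x x' hl
    rw [hfac, hfac]
    exact this
  refine ⟨⟨fun b => (hP.lift (Fan.mk Z fun i0 => f (M.right i0))).down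
    (Function.surjInv hq b)⟩, ?_⟩
  apply hom_ext
  funext p
  show (hP.lift (Fan.mk Z fun i0 => f (M.right i0))).down (Function.surjInv hq (r.down p))
      = (hP.lift (Fan.mk Z fun i0 => f (M.right i0))).down p
  exact hRconst _ _ (Function.surjInv_eq hq (r.down p))

theorem trivial_iff_not_SetOp (S : Set Matr) :
    (∀ (C : Type u) [Category.{v} C] [HasFiniteLimits C],
        Matr.HasSClosedRels S C (MorphismProperty.monomorphisms C) →
        ∀ X Y : C, Subsingleton (X ⟶ Y)) ↔
    ¬ Matr.HasSClosedRels S (Type w)ᵒᵖ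
        (MorphismProperty.monomorphisms (Type w)ᵒᵖ) := by
  constructor
  · intro H hSet
    -- two distinct parallel morphisms in `(Type w)ᵒᵖ`
    have hφψ : (Quiver.Hom.op (TypeCat.ofHom fun _ => (⟨true⟩ : ULift.{w} Bool)) :
          Opposite.op (ULift.{w} Bool) ⟶ Opposite.op (ULift.{w} Bool)) ≠
        Quiver.Hom.op (TypeCat.ofHom fun _ => (⟨false⟩ : ULift.{w} Bool)) := by
      intro hcontra
      have h1 : (TypeCat.ofHom fun _ => (⟨true⟩ : ULift.{w} Bool)) = TypeCat.ofHom fun _ => (⟨false⟩ : ULift.{w} Bool) :=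
        Quiver.Hom.op_inj hcontra
      exact Bool.noConfusion (congrArg ULift.down (types_congr_hom h1 ⟨true⟩))
    have hcrit : ∀ M ∈ S, M.Crit :=
      fun M hM => Matr.crit_of_closed hφψ M (hSet M hM)
    have hFS : Matr.HasSClosedRels S FSOp.{u}
        (MorphismProperty.monomorphisms FSOp.{u}) :=
      fun M hM => FSOp.closed_of_crit (hcrit M hM)
    have hsub := H FSOp.{u} hFS (FSOp.mk 2) (FSOp.mk 2)
    have h2 : (⟨fun x => x⟩ : (FSOp.mk 2 : FSOp.{u}) ⟶ FSOp.mk 2) = ⟨fun _ => 0⟩ :=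
      hsub.elim _ _
    exact (by decide : (1 : Fin 2) ≠ 0) (congrFun (congrArg ULift.down h2) 1)
  · intro hn C _ _ hC X Y
    by_contra hns
    rw [not_subsingleton_iff_nontrivial] at hns
    obtain ⟨φ, ψ, hφψ⟩ := exists_pair_ne (X ⟶ Y)
    exact hn (fun M hM =>
      Matr.closed_setOp_of_crit (Matr.crit_of_closed hφψ M (hC M hM)))
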